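/- For all t > 0, ε ∈ (0,1), and bounded self-adjoint operators A, V, W on a Hilbert space with A ≥ 0: n(−t, A − V − W) ≤ n(−tε, εA − W) + n(−t(1−ε), (1−ε)A − V), where n(−s, T) denotes the supremum of dimensions of subspaces on which ⟨Tu,u⟩ < −s‖u‖². -/

import Mathlib

open MeasureTheory Filter Topology ENNReal

/-- `counting s T` is the supremum of dimensions of subspaces `L` such that
`⟨Tu, u⟩ < -s ‖u‖²` for all nonzero `u ∈ L` (possibly infinite). -/
noncomputable def counting {H : Type*} [NormedAddCommGroup H] [InnerProductSpace ℂ H]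
    (s : ℝ) (T : H →L[ℂ] H) : ℝ≥0∞ :=
  ⨆ (L : Submodule ℂ H) (_ : ∀ u ∈ L, u ≠ 0 → (inner ℂ (T u) u : ℂ).re < -s * ‖u‖ ^ 2),
    ((Module.rank ℂ L).toENat : ℝ≥0∞)

section Aux

variable {H : Type*} [NormedAddCommGroup H] [InnerProductSpace ℂ H] [CompleteSpace H]

/-- Lower bound on `counting` from a finite-dimensional witness subspace. -/
lemma counting_ge_finrank (s : ℝ) (T : H →L[ℂ] H) (L : Submodule ℂ H) [FiniteDimensional ℂ L]
    (hL : ∀ u ∈ L, u ≠ 0 → (inner ℂ (T u) u : ℂ).re < -s * ‖u‖ ^ 2) :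
    (Module.finrank ℂ L : ℝ≥0∞) ≤ counting s T := by
  have h1 : ((Module.rank ℂ L).toENat : ℝ≥0∞) ≤ counting s T :=
    le_iSup₂ (f := fun (L : Submodule ℂ H)
      (_ : ∀ u ∈ L, u ≠ 0 → (inner ℂ (T u) u : ℂ).re < -s * ‖u‖ ^ 2) =>
      ((Module.rank ℂ L).toENat : ℝ≥0∞)) L hL
  rwa [← Module.finrank_eq_rank, Cardinal.toENat_nat] at h1

lemma enat_coe_le_of_forall_nat {x : ℕ∞} {y : ℝ≥0∞}
    (h : ∀ k : ℕ, (k : ℕ∞) ≤ x → (k : ℝ≥0∞) ≤ y) : (x : ℝ≥0∞) ≤ y := by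
  cases x using ENat.recTopCoe with
  | top =>
    have h' : ∀ k : ℕ, (k : ℝ≥0∞) ≤ y := fun k => h k le_top
    rcases eq_or_ne y ⊤ with rfl | hy
    · exact le_top
    · obtain ⟨k, hk⟩ := ENNReal.exists_nat_gt hy
      exact absurd (h' k) hk.not_ge
  | coe k => simpa using h k le_rfl

/-- The key splitting step: if the quadratic form of `S + T` is `< -(a+b)‖u‖²` on a
finite-dimensional subspace `M`, then `dim M ≤ n(-a, S) + n(-b, T)`. -/
lemma key_step (S T : H →L[ℂ] H) (hS : IsSelfAdjoint S) (a b : ℝ)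
    (M : Submodule ℂ H) [FiniteDimensional ℂ M]
    (hM : ∀ u ∈ M, u ≠ 0 → (inner ℂ ((S + T) u) u : ℂ).re < -(a + b) * ‖u‖ ^ 2) :
    (Module.finrank ℂ M : ℝ≥0∞) ≤ counting a S + counting b T := by
  classical
  haveI : CompleteSpace M := FiniteDimensional.complete ℂ M
  set n := Module.finrank ℂ M with hn
  -- the compression of `S + a•1` to `M`
  set B : M →ₗ[ℂ] M :=
    ((M.orthogonalProjectionOnto).toLinearMap.comp (S.toLinearMap.comp M.subtype))
      + (a : ℂ) • LinearMap.id with hB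
  have hBapply : ∀ x : M, B x = M.orthogonalProjectionOnto (S (x : H)) + (a : ℂ) • x := by
    intro x; rfl
  have hBform : ∀ x y : M,
      (inner ℂ (B x) y : ℂ) = inner ℂ (S (x : H)) (y : H) + (a : ℂ) * inner ℂ (x : H) (y : H) := by
    intro x y
    rw [hBapply, inner_add_left, inner_smul_left,
      Submodule.inner_orthogonalProjectionOnto_eq_of_mem_right, Submodule.coe_inner]
    simp [Complex.conj_ofReal]
  have hsym : B.IsSymmetric := by
    intro x y
    rw [hBform]
    have h2 : (inner ℂ (B y) x : ℂ) = inner ℂ (S (y : H)) (x : H) + (a : ℂ) * inner ℂ (y : H) (x : H) :=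
      hBform y x
    have h3 : (inner ℂ x (B y) : ℂ) = (starRingEnd ℂ) (inner ℂ (B y) x : ℂ) := (inner_conj_symm _ _).symm
    rw [h3, h2]
    have hSxy : (inner ℂ (S (y : H)) (x : H) : ℂ) = (starRingEnd ℂ) (inner ℂ (S (x : H)) (y : H) : ℂ) := by
      rw [← inner_conj_symm]
      congr 1
      exact (hS.isSymmetric (x : H) (y : H)).symm
    rw [hSxy]
    simp [map_mul, Complex.conj_ofReal, inner_conj_symm]
  -- eigenbasis of B
  obtain hn' : Module.finrank ℂ M = n := hn.symm
  set bb := hsym.eigenvectorBasis hn' with hbb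
  set μ := hsym.eigenvalues hn' with hμ
  have happly : ∀ i, B (bb i) = (μ i : ℂ) • bb i := fun i => hsym.apply_eigenvectorBasis hn' i
  -- quadratic form of B in coordinates
  have hsum : ∀ x : M, (inner ℂ (B x) x : ℂ).re = ∑ i, μ i * ‖bb.repr x i‖ ^ 2 := by
    intro x
    have h1 : (inner ℂ (B x) x : ℂ) = inner ℂ (bb.repr (B x)) (bb.repr x) :=
      (bb.repr.inner_map_map (B x) x).symm
    have h2 : ∀ i, bb.repr (B x) i = (μ i : ℂ) * bb.repr x i := by
      intro i
      rw [bb.repr_apply_apply, ← hsym (bb i) x, happly, inner_smul_left, Complex.conj_ofReal,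
        ← bb.repr_apply_apply]
    rw [h1, PiLp.inner_apply]
    simp only [h2, RCLike.inner_apply, map_mul, Complex.conj_ofReal]
    rw [Complex.re_sum]
    congr 1
    ext i
    have : (starRingEnd ℂ) (bb.repr x i) * bb.repr x i = (‖bb.repr x i‖ ^ 2 : ℝ) := by
      rw [Complex.conj_mul']
      norm_cast
    rw [mul_comm, mul_assoc, this, ← Complex.ofReal_mul, Complex.ofReal_re]
  -- relation between the forms of B and S
  have hrel : ∀ x : M, (inner ℂ (B x) x : ℂ).re
      = (inner ℂ (S (x : H)) (x : H) : ℂ).re + a * ‖(x : H)‖ ^ 2 := by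
    intro x
    rw [hBform, Complex.add_re]
    congr 1
    have h1 : (inner ℂ (x : H) (x : H) : ℂ) = ((‖(x : H)‖ ^ 2 : ℝ) : ℂ) := by
      rw [inner_self_eq_norm_sq_to_K (𝕜 := ℂ)]; norm_cast
    rw [h1, ← Complex.ofReal_mul, Complex.ofReal_re]
  -- coordinates outside the index set vanish on the corresponding span
  have hvanish : ∀ (idx : Finset (Fin n)) (x : M),
      x ∈ Submodule.span ℂ (Set.range (fun i : idx => bb (i : Fin n))) →
      ∀ j ∉ idx, bb.repr x j = 0 := by
    intro idx x hx j hj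
    induction hx using Submodule.span_induction with
    | mem y hy =>
      obtain ⟨i, rfl⟩ := hy
      rw [bb.repr_self, EuclideanSpace.single_apply]
      have : j ≠ (i : Fin n) := fun h => hj (h ▸ i.2)
      simp [this]
    | zero => simp
    | add u v hu hv ihu ihv => simp [ihu, ihv]
    | smul c u hu ih => simp [ih]
  -- the negative and nonnegative spectral index sets
  set neg : Finset (Fin n) := Finset.univ.filter (fun i => μ i < 0) with hnegdef
  set pos : Finset (Fin n) := Finset.univ.filter (fun i => ¬ μ i < 0) with hposdef
  set Mneg : Submodule ℂ M := Submodule.span ℂ (Set.range (fun i : neg => bb (i : Fin n)))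
    with hMnegdef
  set Mpos : Submodule ℂ M := Submodule.span ℂ (Set.range (fun i : pos => bb (i : Fin n)))
    with hMposdef
  have hlineg : LinearIndependent ℂ (fun i : neg => bb (i : Fin n)) :=
    bb.orthonormal.linearIndependent.comp _ Subtype.val_injective
  have hlipos : LinearIndependent ℂ (fun i : pos => bb (i : Fin n)) :=
    bb.orthonormal.linearIndependent.comp _ Subtype.val_injective
  haveI : FiniteDimensional ℂ Mneg := FiniteDimensional.span_of_finite ℂ (Set.finite_range _)
  haveI : FiniteDimensional ℂ Mpos := FiniteDimensional.span_of_finite ℂ (Set.finite_range _)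
  have hfneg : Module.finrank ℂ Mneg = neg.card := by
    rw [hMnegdef, finrank_span_eq_card hlineg, Fintype.card_coe]
  have hfpos : Module.finrank ℂ Mpos = pos.card := by
    rw [hMposdef, finrank_span_eq_card hlipos, Fintype.card_coe]
  -- their images in H
  set Nneg : Submodule ℂ H := Mneg.map M.subtype with hNnegdef
  set Npos : Submodule ℂ H := Mpos.map M.subtype with hNposdef
  have eneg := Submodule.equivMapOfInjective M.subtype M.injective_subtype Mneg
  have epos := Submodule.equivMapOfInjective M.subtype M.injective_subtype Mpos
  haveI : FiniteDimensional ℂ Nneg := Module.Finite.equiv eneg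
  haveI : FiniteDimensional ℂ Npos := Module.Finite.equiv epos
  have hfNneg : Module.finrank ℂ Nneg = neg.card := by rw [← eneg.finrank_eq, hfneg]
  have hfNpos : Module.finrank ℂ Npos = pos.card := by rw [← epos.finrank_eq, hfpos]
  -- witness property for Nneg
  have hwneg : ∀ u ∈ Nneg, u ≠ 0 → (inner ℂ (S u) u : ℂ).re < -a * ‖u‖ ^ 2 := by
    rintro u hu hu0
    obtain ⟨x, hx, rfl⟩ := hu
    simp only [Submodule.coe_subtype] at hu0 ⊢
    have hx0 : x ≠ 0 := fun h => hu0 (by rw [h]; rfl)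
    have hq : (inner ℂ (B x) x : ℂ).re < 0 := by
      rw [hsum]
      have hle : ∀ i ∈ Finset.univ, μ i * ‖bb.repr x i‖ ^ 2 ≤ (fun _ : Fin n => (0:ℝ)) i := by
        intro i _
        by_cases hi : i ∈ neg
        · have hμi : μ i < 0 := by
            have := Finset.mem_filter.mp (hnegdef ▸ hi)
            exact this.2
          exact mul_nonpos_of_nonpos_of_nonneg hμi.le (by positivity)
        · rw [hvanish neg x hx i hi]; simp
      have hex : ∃ i ∈ Finset.univ, μ i * ‖bb.repr x i‖ ^ 2 < (fun _ : Fin n => (0:ℝ)) i := by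
        have hr0 : bb.repr x ≠ 0 := fun h => hx0 (by simpa using bb.repr.map_eq_zero_iff.mp h)
        obtain ⟨j, hj⟩ := Function.ne_iff.mp (by simpa using hr0 : (bb.repr x).ofLp ≠ 0)
        have hj' : bb.repr x j ≠ 0 := by simpa using hj
        have hjneg : j ∈ neg := by
          by_contra hjn; exact hj' (hvanish neg x hx j hjn)
        refine ⟨j, Finset.mem_univ _, ?_⟩
        have hμj : μ j < 0 := (Finset.mem_filter.mp hjneg).2
        have hpos' : (0:ℝ) < ‖bb.repr x j‖ ^ 2 := pow_pos (norm_pos_iff.mpr hj') 2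
        exact mul_neg_of_neg_of_pos hμj hpos'
      have := Finset.sum_lt_sum hle hex
      simpa using this
    have h2 := hrel x
    have hnorm : ‖(x : H)‖ = ‖(x : H)‖ := rfl
    linarith [h2 ▸ hq]
  -- witness property for Npos
  have hwpos : ∀ u ∈ Npos, u ≠ 0 → (inner ℂ (T u) u : ℂ).re < -b * ‖u‖ ^ 2 := by
    rintro u hu hu0
    obtain ⟨x, hx, rfl⟩ := hu
    simp only [Submodule.coe_subtype] at hu0 ⊢
    have hq : 0 ≤ (inner ℂ (B x) x : ℂ).re := by
      rw [hsum]
      apply Finset.sum_nonneg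
      intro i _
      by_cases hi : i ∈ pos
      · have hμi : ¬ μ i < 0 := (Finset.mem_filter.mp hi).2
        exact mul_nonneg (not_lt.mp hμi) (by positivity)
      · rw [hvanish pos x hx i hi]; simp
    have h1 := hM (x : H) (SetLike.coe_mem x) hu0
    have hsplit : (inner ℂ ((S + T) (x : H)) (x : H) : ℂ).re
        = (inner ℂ (S (x : H)) (x : H) : ℂ).re + (inner ℂ (T (x : H)) (x : H) : ℂ).re := by
      simp [ContinuousLinearMap.add_apply, inner_add_left]
    have h2 := hrel x
    rw [hsplit] at h1
    linarith
  have cneg : (neg.card : ℝ≥0∞) ≤ counting a S := by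
    have := counting_ge_finrank a S Nneg hwneg
    rwa [hfNneg] at this
  have cpos : (pos.card : ℝ≥0∞) ≤ counting b T := by
    have := counting_ge_finrank b T Npos hwpos
    rwa [hfNpos] at this
  have hcard : neg.card + pos.card = n := by
    have := Finset.card_filter_add_card_filter_not
      (s := (Finset.univ : Finset (Fin n))) (p := fun i => μ i < 0)
    simpa [hnegdef, hposdef] using this
  calc (n : ℝ≥0∞) = ((neg.card + pos.card : ℕ) : ℝ≥0∞) := by rw [hcard]
    _ = (neg.card : ℝ≥0∞) + (pos.card : ℝ≥0∞) := by push_cast; ring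
    _ ≤ counting a S + counting b T := add_le_add cneg cpos

end Aux

theorem stmt6 {H : Type*} [NormedAddCommGroup H] [InnerProductSpace ℂ H] [CompleteSpace H]
    (A V W : H →L[ℂ] H) (hA : IsSelfAdjoint A) (hV : IsSelfAdjoint V) (hW : IsSelfAdjoint W)
    (hA0 : ∀ u : H, 0 ≤ (inner ℂ (A u) u : ℂ).re)
    (t ε : ℝ) (ht : 0 < t) (hε0 : 0 < ε) (hε1 : ε < 1) :
    counting t (A - V - W) ≤
      counting (t * ε) ((ε : ℂ) • A - W) + counting (t * (1 - ε)) (((1 - ε : ℝ) : ℂ) • A - V) := by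
  classical
  set S : H →L[ℂ] H := (ε : ℂ) • A - W with hSdef
  set T : H →L[ℂ] H := ((1 - ε : ℝ) : ℂ) • A - V with hTdef
  have hST : S + T = A - V - W := by
    ext u
    simp only [hSdef, hTdef, ContinuousLinearMap.add_apply, ContinuousLinearMap.sub_apply,
      ContinuousLinearMap.smul_apply]
    push_cast
    module
  have hSsa : IsSelfAdjoint S := by
    refine IsSelfAdjoint.sub ?_ hW
    have hεs : IsSelfAdjoint (ε : ℂ) := Complex.conj_ofReal ε
    exact hεs.smul hA
  have hteq : t * ε + t * (1 - ε) = t := by ring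
  rw [counting]
  refine iSup₂_le fun L hL => ?_
  apply enat_coe_le_of_forall_nat
  intro k hk
  -- extract a finite-dimensional subspace of dimension k
  have hkc : (k : Cardinal) ≤ Module.rank ℂ L := by
    by_contra hc
    rw [not_le] at hc
    obtain ⟨m, hm⟩ := Cardinal.lt_aleph0.mp (hc.trans (Cardinal.nat_lt_aleph0 k))
    rw [hm, Cardinal.toENat_nat] at hk
    rw [hm] at hc
    have h1 : k ≤ m := by exact_mod_cast hk
    have h2 : m < k := by exact_mod_cast hc
    omega
  obtain ⟨s, hscard, hsli⟩ := le_rank_iff_exists_linearIndependent_finset.mp hkc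
  set v : ↥(s : Set L) → H := fun i => ((i : L) : H) with hv
  have hli : LinearIndependent ℂ v := hsli.map' L.subtype (Submodule.ker_subtype L)
  set M : Submodule ℂ H := Submodule.span ℂ (Set.range v) with hMdef
  haveI : FiniteDimensional ℂ M := FiniteDimensional.span_of_finite ℂ (Set.finite_range v)
  have hfr : Module.finrank ℂ M = k := by
    rw [hMdef, finrank_span_eq_card hli]
    simpa using hscard
  have hML : M ≤ L := by
    rw [hMdef, Submodule.span_le]
    rintro _ ⟨i, rfl⟩
    exact (i : L).2
  have hMw : ∀ u ∈ M, u ≠ 0 →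
      (inner ℂ ((S + T) u) u : ℂ).re < -(t * ε + t * (1 - ε)) * ‖u‖ ^ 2 := by
    intro u hu hu0
    rw [hST, hteq]
    exact hL u (hML hu) hu0
  have := key_step S T hSsa (t * ε) (t * (1 - ε)) M hMw
  rwa [hfr] at this
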